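/- For every unit vector v = (v₁,v₂,v₃,v₄) ∈ ℂ⁴ (i.e. |v₁|²+|v₂|²+|v₃|²+|v₄|² = 1), there exists h ∈ Sp2 such that h_{i2} = vᵢ for i = 1,2,3,4. -/

import Mathlib

set_option maxHeartbeats 2000000

open Finset

noncomputable section

/-- SU(5): 5×5 special unitary complex matrices. -/
def SU5 : Set (Matrix (Fin 5) (Fin 5) ℂ) :=
  {A | A * A.conjTranspose = 1 ∧ A.det = 1}

/-- The image of the embedding Sp(2) ↪ SU(5). -/
def Sp2 : Set (Matrix (Fin 5) (Fin 5) ℂ) :=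
  {h | h ∈ SU5 ∧
    (∀ i : Fin 5, h i 4 = if i = 4 then 1 else 0) ∧
    (∀ i : Fin 5, h 4 i = if i = 4 then 1 else 0) ∧
    (∀ i j : Fin 5, i < 2 → j < 2 →
      h (i + 2) (j + 2) = (starRingEnd ℂ) (h i j) ∧
      h (i + 2) j = -(starRingEnd ℂ) (h i (j + 2)))}

open ComplexConjugate in
theorem sp2_aux_case2 (B D : ℂ) (h2 : B * conj B + D * conj D = 1) :
    (!![1,0,0,0,0; 0,B,0,-(conj D),0; 0,0,1,0,0; 0,D,0,conj B,0; 0,0,0,0,1] :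
      Matrix (Fin 5) (Fin 5) ℂ) ∈ Sp2 := by
  refine ⟨⟨?_, ?_⟩, ?_, ?_, ?_⟩
  · ext i j
    fin_cases i <;> fin_cases j <;>
      simp [Matrix.mul_apply, Matrix.conjTranspose_apply, Fin.sum_univ_five, Matrix.one_apply] <;>
      ring_nf <;>
      linear_combination h2
  · simp [Matrix.det_succ_row_zero, Fin.sum_univ_succ, Fin.succAbove]
    linear_combination h2
  · intro i; fin_cases i <;> simp [Matrix.vecHead, Matrix.vecTail]
  · intro i; fin_cases i <;> simp [Matrix.vecHead, Matrix.vecTail]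
  · intro i j hi hj
    fin_cases i <;> fin_cases j <;> simp_all <;> rfl

open ComplexConjugate in
theorem sp2_aux_case1 (A B C D : ℂ) (r : ℝ) (hR : (r:ℂ) ≠ 0)
    (h1 : A * conj A + C * conj C = (r:ℂ) * r)
    (h2 : B * conj B + D * conj D = 1 - (r:ℂ) * r) :
    (!![(-(A*conj B) - conj C * D)/r, A, (B*conj C - A*conj D)/r, -conj C, 0;
       (r:ℂ), B, 0, -conj D, 0;
       ((conj A)*D - (conj B)*C)/r, C, (-(conj A)*B - C*conj D)/r, conj A, 0;
       0, D, (r:ℂ), conj B, 0;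
       0,0,0,0,1] :
      Matrix (Fin 5) (Fin 5) ℂ) ∈ Sp2 := by
  refine ⟨⟨?_, ?_⟩, ?_, ?_, ?_⟩
  · ext i j
    fin_cases i <;> fin_cases j <;>
      simp [Matrix.mul_apply, Matrix.conjTranspose_apply, Fin.sum_univ_five, Matrix.one_apply]
    all_goals try field_simp
    all_goals first
      | ring1
      | linear_combination h2
      | linear_combination (B * conj B + D * conj D + (r:ℂ) * r) * h1 + ((r:ℂ) * r) * h2
  · simp [Matrix.det_succ_row_zero, Fin.sum_univ_succ, Fin.succAbove]
    field_simp
    linear_combination ((A*conj A + C*conj C) * (B*conj B + D*conj D + (r:ℂ)*r + 1)) * h2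
      + h1
  · intro i; fin_cases i <;> simp [Matrix.vecHead, Matrix.vecTail]
  · intro i; fin_cases i <;> simp [Matrix.vecHead, Matrix.vecTail]
  · intro i j hi hj
    fin_cases i <;> fin_cases j <;> simp_all [neg_div, Complex.conj_ofReal] <;> ring

open ComplexConjugate in
theorem stmt3 (v : Fin 4 → ℂ) (hv : ∑ i, ‖v i‖ ^ 2 = 1) :
    ∃ h ∈ Sp2, ∀ i : Fin 4, h i.castSucc 1 = v i := by
  rw [Fin.sum_univ_four] at hv
  have hsum : v 0 * conj (v 0) + v 1 * conj (v 1) + v 2 * conj (v 2) + v 3 * conj (v 3) = 1 := by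
    simp only [Complex.mul_conj]
    norm_cast
    simpa only [Complex.sq_norm] using hv
  by_cases hs : ‖v 0‖ ^ 2 + ‖v 2‖ ^ 2 = 0
  · have h0 : v 0 = 0 := by
      have := norm_nonneg (v 0); have := norm_nonneg (v 2)
      have : ‖v 0‖ = 0 := by nlinarith
      exact norm_eq_zero.mp this
    have h2 : v 2 = 0 := by
      have := norm_nonneg (v 0); have := norm_nonneg (v 2)
      have : ‖v 2‖ = 0 := by nlinarith
      exact norm_eq_zero.mp this
    refine ⟨_, sp2_aux_case2 (v 1) (v 3) ?_, ?_⟩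
    · rw [h0, h2] at hsum; linear_combination hsum
    · intro i
      fin_cases i <;> simp [h0, h2, Fin.castSucc, Fin.castAdd, Fin.castLE]
  · set s : ℝ := ‖v 0‖ ^ 2 + ‖v 2‖ ^ 2 with hs_def
    have hs0 : 0 ≤ s := by positivity
    have hrr : Real.sqrt s * Real.sqrt s = s := Real.mul_self_sqrt hs0
    have hRne : ((Real.sqrt s : ℝ) : ℂ) ≠ 0 := by
      simp only [ne_eq, Complex.ofReal_eq_zero]
      intro h
      exact hs (by rw [← hrr, h, mul_zero])
    have h1 : v 0 * conj (v 0) + v 2 * conj (v 2)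
        = ((Real.sqrt s : ℝ) : ℂ) * ((Real.sqrt s : ℝ) : ℂ) := by
      rw [Complex.mul_conj, Complex.mul_conj]
      rw [← Complex.ofReal_mul, hrr, hs_def]
      norm_cast
      rw [Complex.sq_norm, Complex.sq_norm]
    have h2 : v 1 * conj (v 1) + v 3 * conj (v 3)
        = 1 - ((Real.sqrt s : ℝ) : ℂ) * ((Real.sqrt s : ℝ) : ℂ) := by
      linear_combination hsum - h1
    refine ⟨_, sp2_aux_case1 (v 0) (v 1) (v 2) (v 3) (Real.sqrt s) hRne h1 h2, ?_⟩
    intro i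
    fin_cases i <;> simp [Fin.castSucc, Fin.castAdd, Fin.castLE]
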